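/- Let α ∈ (0, 1/2). Then for every t ∈ ℝ with tan t defined, there exists y ∈ ℝ with |y| < π·α such that (1−α)·tan t = tan(t−y). -/

import Mathlib

open Real

lemma key_tan_bound (α s : ℝ) (hα0 : 0 < α) (hα1 : α < 1/2)
    (hs0 : 0 ≤ s) (hs : s < π / 2) :
    0 ≤ s - arctan ((1 - α) * tan s) ∧ s - arctan ((1 - α) * tan s) < π * α := by
  have hπ := Real.pi_gt_three
  have htan0 : 0 ≤ tan s := tan_nonneg_of_nonneg_of_le_pi_div_two hs0 hs.le
  constructor
  · have h1 : (1 - α) * tan s ≤ tan s := by nlinarith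
    have := arctan_strictMono.monotone h1
    rw [arctan_tan (by linarith) hs] at this
    linarith
  · rcases lt_or_ge s (π * α) with h | h
    · have h0 : 0 ≤ arctan ((1 - α) * tan s) := by
        rw [← arctan_zero]
        exact arctan_strictMono.monotone (by nlinarith)
      linarith
    · -- s ≥ π α; show s - πα < arctan ((1-α) tan s)
      set u := s - π * α with hu
      have hu0 : 0 ≤ u := by linarith
      have hus : u < π / 2 := by nlinarith
      have hcu : 0 < cos u := cos_pos_of_mem_Ioo ⟨by linarith, hus⟩
      have hcs : 0 < cos s := cos_pos_of_mem_Ioo ⟨by linarith, hs⟩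
      have hca : 0 < cos (π * α) := cos_pos_of_mem_Ioo ⟨by nlinarith, by nlinarith⟩
      have hsa : π * α * cos (π * α) < sin (π * α) := by
        have h2 : π * α < tan (π * α) := lt_tan (by positivity) (by nlinarith)
        rw [tan_eq_sin_div_cos, lt_div_iff₀ hca] at h2
        exact h2
      have hss : 0 ≤ sin s := sin_nonneg_of_nonneg_of_le_pi hs0 (by nlinarith)
      have hkey : tan u < (1 - α) * tan s := by
        rw [tan_eq_sin_div_cos, tan_eq_sin_div_cos, mul_div_assoc' (1 - α),
          div_lt_div_iff₀ hcu hcs, hu, sin_sub, cos_sub]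
        have hpy : sin s ^ 2 + cos s ^ 2 = 1 := sin_sq_add_cos_sq s
        have hSC : sin s * cos s ≤ 1 / 2 := by nlinarith [sq_nonneg (sin s - cos s)]
        have hS2 : sin s ^ 2 ≤ 1 := by nlinarith [sq_nonneg (cos s)]
        have h12 : (1:ℝ) / 2 ≤ 1 - α * sin s ^ 2 := by nlinarith [sq_nonneg (sin s)]
        have hstep : π * α * cos (π * α) * (1 - α * sin s ^ 2)
            < sin (π * α) * (1 - α * sin s ^ 2) :=
          mul_lt_mul_of_pos_right hsa (by linarith)
        have hac : 0 < α * cos (π * α) := mul_pos hα0 hca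
        have hstep2 : α * (sin s * cos s) * cos (π * α)
            < π * α * cos (π * α) * (1 - α * sin s ^ 2) := by
          nlinarith [mul_le_mul_of_nonneg_left hSC hac.le,
            mul_le_mul_of_nonneg_left h12 (mul_pos (mul_pos Real.pi_pos hα0) hca).le,
            mul_pos (show (0:ℝ) < π - 1 by linarith) hac]
        have hid : sin (π * α) * (sin s ^ 2 + cos s ^ 2) = sin (π * α) := by rw [hpy, mul_one]
        nlinarith [hstep, hstep2, hid]
      have := arctan_strictMono hkey
      rw [arctan_tan (by linarith) hus] at this
      linarith

theorem tan_scale_shift_down (α : ℝ) (hα0 : 0 < α) (hα1 : α < 1/2) (t : ℝ)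
    (ht : ∀ k : ℤ, t ≠ k * π + π / 2) :
    ∃ y : ℝ, |y| < π * α ∧ (∀ k : ℤ, t - y ≠ k * π + π / 2) ∧
      (1 - α) * Real.tan t = Real.tan (t - y) := by
  have hπ : 0 < π := Real.pi_pos
  set k := round (t / π) with hk
  set s := t - k * π with hsdef
  have hround : |t / π - k| ≤ 1 / 2 := abs_sub_round _
  have habs : |s| ≤ π / 2 := by
    have h' : s = (t / π - k) * π := by rw [hsdef]; field_simp
    rw [h', abs_mul, abs_of_pos hπ]
    nlinarith [abs_nonneg (t / π - (k:ℝ))]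
  rw [abs_le] at habs
  have hs2 : s < π / 2 := lt_of_le_of_ne habs.2 (by
    intro h
    exact ht k (by rw [hsdef] at h; linarith))
  have hs1 : -(π / 2) < s := lt_of_le_of_ne' habs.1 (by
    intro h
    apply ht (k - 1)
    push_cast
    rw [hsdef] at h
    linarith)
  have htant : tan t = tan s := by
    have : t = s + k * π := by rw [hsdef]; ring
    rw [this, tan_add_int_mul_pi]
  set a := arctan ((1 - α) * tan s) with ha
  refine ⟨s - a, ?_, ?_, ?_⟩
  · rcases le_or_gt 0 s with h | h
    · obtain ⟨h1, h2⟩ := key_tan_bound α s hα0 hα1 h hs2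
      rw [abs_lt]
      constructor
      · nlinarith
      · exact h2
    · obtain ⟨h1, h2⟩ := key_tan_bound α (-s) hα0 hα1 (by linarith) (by linarith)
      rw [tan_neg, mul_neg, arctan_neg] at h1 h2
      rw [abs_lt]
      constructor
      · rw [ha]; linarith
      · rw [ha]; nlinarith
  · intro m hm
    have h1 : t - (s - a) = a + k * π := by rw [hsdef]; ring
    rw [h1] at hm
    have h2 : -(π / 2) < a := neg_pi_div_two_lt_arctan _
    have h3 : a < π / 2 := arctan_lt_pi_div_two _
    have h4 : (m - k : ℝ) * π = a - π / 2 := by linarith [hm]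
    rcases le_or_gt 0 (m - k) with h | h
    · have : (0:ℝ) ≤ (m : ℝ) - (k : ℝ) := by exact_mod_cast h
      nlinarith
    · have : (m : ℝ) - (k : ℝ) ≤ -1 := by
        have : m - k ≤ -1 := by omega
        exact_mod_cast this
      nlinarith
  · have h1 : t - (s - a) = a + k * π := by rw [hsdef]; ring
    rw [h1, tan_add_int_mul_pi, ha, tan_arctan, htant]
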